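/- Fix k ≥ 1 and a family (η_α : α < λ) of elements of (k+1)^ω, with all η_α pairwise distinct. Let u_0, …, u_{k-1} be finite subsets of λ forming a Δ-system with root u, all of the same cardinality N, and suppose: (a) there is h ∈ ω such that for each i < k the restrictions η_β↾h for β ∈ u_i are pairwise distinct; (b) for each i, j < k and each n < N, the n-th elements β ∈ u_i and β' ∈ u_j (in increasing order) satisfy η_β↾(h+1) = η_{β'}↾(h+1); (c) there are colors c_0,…,c_{N-1} ∈ ω such that each r_i : u_i → ω assigns color c_n to the n-th element of u_i; and (d) each r_i is a condition, i.e., there is no r_i-homogeneous set {α_0,…,α_k} ⊆ u_i and ν ∈ (k+1)^{<ω} with ν⌢⟨j⟩ ⊑ η_{α_j} for all j ≤ k. Then the union r = ⋃_{i<k} r_i is also a condition: there is no r-homogeneous {α_0,…,α_k} ⊆ ⋃_{i<k} u_i and ν ∈ (k+1)^{<ω} with ν⌢⟨j⟩ ⊑ η_{α_j} for all j ≤ k. -/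

import Mathlib

open Cardinal

def InitSeg {β : Type*} (l : List β) (g : ℕ → β) : Prop :=
  ∀ m (h : m < l.length), l.get ⟨m, h⟩ = g m

/-- There is an `r`-homogeneous set `{α_0,…,α_k} ⊆ S` and `ν ∈ (k+1)^{<ω}`
with `ν⌢⟨j⟩ ⊑ η_{α_j}` for all `j ≤ k`. -/
def Bad (k : ℕ) (η : Ordinal → ℕ → Fin (k + 1))
    (r : Ordinal → ℕ) (S : Set Ordinal) : Prop :=
  ∃ (ν : List (Fin (k + 1))) (α : Fin (k + 1) → Ordinal),
    Function.Injective α ∧ (∀ j, α j ∈ S) ∧ (∀ j j', r (α j) = r (α j')) ∧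
    ∀ j, InitSeg (ν ++ [j]) (η (α j))

/-- Amalgamation for the Knaster poset: the union of k conditions of the same
type over a Δ-system is a condition. -/
theorem stmt9 (k : ℕ) (hk : 1 ≤ k)
    (η : Ordinal → ℕ → Fin (k + 1))
    (u : Fin k → Finset Ordinal) (t : Finset Ordinal) (N : ℕ)
    (hinj : ∀ α ∈ ⋃ i, (↑(u i) : Set Ordinal), ∀ β ∈ ⋃ i, (↑(u i) : Set Ordinal),
      η α = η β → α = β)
    (hΔ : ∀ i j, i ≠ j → u i ∩ u j = t)
    (hN : ∀ i, (u i).card = N)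
    (h : ℕ)
    (ha : ∀ i, ∀ β ∈ u i, ∀ β' ∈ u i, β ≠ β' → ∃ m < h, η β m ≠ η β' m)
    (hb : ∀ i j (n : ℕ) (β β' : Ordinal), n < N →
      ((u i).sort (· ≤ ·))[n]? = some β →
      ((u j).sort (· ≤ ·))[n]? = some β' →
      ∀ m ≤ h, η β m = η β' m)
    (r : Ordinal → ℕ) (c : ℕ → ℕ)
    (hc : ∀ i (n : ℕ) (β : Ordinal), ((u i).sort (· ≤ ·))[n]? = some β → r β = c n)
    (hd : ∀ i, ¬ Bad k η r ↑(u i)) :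
    ¬ Bad k η r (⋃ i, ↑(u i)) := by
  rintro ⟨ν, α, hαinj, hαmem, hcol, hIS⟩
  set H := ν.length with hH
  have hνget : ∀ (j : Fin (k+1)) m (hm : m < H), η (α j) m = ν.get ⟨m, hm⟩ := by
    intro j m hm
    have h1 := hIS j m (by simp; omega)
    rw [← h1]; simp only [List.get_eq_getElem]; exact List.getElem_append_left hm
  have hηH : ∀ j : Fin (k+1), η (α j) H = j := by
    intro j
    have h1 := hIS j H (by simp; omega)
    rw [← h1]
    simp [hH, List.getElem_append_right]
  have hchoose : ∀ j : Fin (k+1), ∃ (i : Fin k) (n : ℕ), n < N ∧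
      ((u i).sort (· ≤ ·))[n]? = some (α j) := by
    intro j
    obtain ⟨_, ⟨i, rfl⟩, hmem⟩ := hαmem j
    have hmem' : α j ∈ (u i).sort (· ≤ ·) := (Finset.mem_sort _).2 hmem
    obtain ⟨n, hget⟩ := List.mem_iff_get.1 hmem'
    refine ⟨i, n, ?_, ?_⟩
    · have hl : ((u i).sort (· ≤ ·)).length = N := by rw [Finset.length_sort, hN i]
      exact lt_of_lt_of_eq n.isLt hl
    · rw [List.getElem?_eq_getElem n.isLt]; exact congrArg some hget
  choose I nn hnN hget using hchoose
  by_cases hHh : h ≤ H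
  · -- pigeonhole on I
    have : ¬ Function.Injective I := by
      intro hinjI
      have := Fintype.card_le_of_injective I hinjI
      simp at this
    rw [Function.not_injective_iff] at this
    obtain ⟨j, j', hIeq, hjne⟩ := this
    have hαne : α j ≠ α j' := fun e => hjne (hαinj e)
    have hmj : α j ∈ u (I j) := by
      have := hget j; exact (Finset.mem_sort _).1 (List.mem_of_getElem? this)
    have hmj' : α j' ∈ u (I j) := by
      have := hget j'; rw [← hIeq] at this
      exact (Finset.mem_sort _).1 (List.mem_of_getElem? this)
    obtain ⟨m, hm, hne⟩ := ha (I j) _ hmj _ hmj' hαne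
    exact hne (by rw [hνget j m (lt_of_lt_of_le hm hHh),
      hνget j' m (lt_of_lt_of_le hm hHh)])
  · push_neg at hHh
    set i0 : Fin k := ⟨0, hk⟩ with hi0
    have hlen : ∀ j : Fin (k+1), nn j < ((u i0).sort (· ≤ ·)).length := by
      intro j; rw [Finset.length_sort, hN i0]; exact hnN j
    set β : Fin (k+1) → Ordinal := fun j => ((u i0).sort (· ≤ ·)).get ⟨nn j, hlen j⟩
      with hβ
    have hgetβ : ∀ j, ((u i0).sort (· ≤ ·))[nn j]? = some (β j) := by
      intro j; exact List.getElem?_eq_getElem (hlen j)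
    have hηβ : ∀ j, ∀ m ≤ h, η (α j) m = η (β j) m := by
      intro j m hm
      exact hb (I j) i0 (nn j) (α j) (β j) (hnN j) (hget j) (hgetβ j) m hm
    refine hd i0 ⟨ν, β, ?_, ?_, ?_, ?_⟩
    · intro j j' he
      have e1 : η (β j) H = j := by rw [← hηβ j H (le_of_lt hHh)]; exact hηH j
      have e2 : η (β j') H = j' := by rw [← hηβ j' H (le_of_lt hHh)]; exact hηH j'
      rw [he, e2] at e1; exact e1.symm
    · intro j
      exact (Finset.mem_sort _).1 (List.get_mem _ _)
    · intro j j'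
      have e1 : r (β j) = c (nn j) := hc i0 (nn j) (β j) (hgetβ j)
      have e2 : r (α j) = c (nn j) := hc (I j) (nn j) (α j) (hget j)
      have e3 : r (β j') = c (nn j') := hc i0 (nn j') (β j') (hgetβ j')
      have e4 : r (α j') = c (nn j') := hc (I j') (nn j') (α j') (hget j')
      rw [e1, ← e2, e3, ← e4]; exact hcol j j'
    · intro j m hm
      have hm' : (m : ℕ) ≤ h := by
        simp at hm; omega
      rw [← hηβ j m hm']
      exact hIS j m hm
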